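/- Let V be a vector space of dimension r over a field, and for each i ∈ {1,…,r} let P_i ⊆ V be a nonzero subspace of dimension at most 2. Suppose that for every nonempty subset I ⊆ {1,…,r} the span of the subspaces {P_i : i ∈ I} has dimension at least |I| (a Hall-type condition). Then for any choice of spanning vectors p_i, p_i' of each P_i, there exists a choice function σ selecting v_i ∈ {p_i, p_i'} for each i such that (v_1,…,v_r) is a basis of V. -/

import Mathlib

open Submodule Module

section Aux

variable {K : Type*} [Field K]

private lemma mapSup {V V₂ : Type*} [AddCommGroup V] [Module K V] [AddCommGroup V₂]
    [Module K V₂] {ι : Type*} (f : V →ₗ[K] V₂) (s : Finset ι) (Q : ι → Submodule K V) :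
    (s.sup Q).map f = s.sup fun i => (Q i).map f := by
  classical
  induction s using Finset.induction_on with
  | empty => simp
  | insert _ _ _ ih => simp [Finset.sup_insert, Submodule.map_sup, ih]

private lemma frkAdd {V : Type*} [AddCommGroup V] [Module K V] [FiniteDimensional K V]
    (W X : Submodule K V) :
    finrank K (X.map W.mkQ) + finrank K ↥(X ⊓ W) = finrank K X := by
  have h := LinearMap.finrank_range_add_finrank_ker (W.mkQ.comp X.subtype)
  rw [LinearMap.range_comp, Submodule.range_subtype, LinearMap.ker_comp,
    Submodule.ker_mkQ] at h
  have e : Submodule.comap X.subtype W = Submodule.comap X.subtype (X ⊓ W) := by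
    ext x
    simp only [Submodule.mem_comap, Submodule.mem_inf]
    exact ⟨fun h => ⟨x.2, h⟩, fun h => h.2⟩
  rw [e, (Submodule.comapSubtypeEquivOfLe (inf_le_left : X ⊓ W ≤ X)).finrank_eq] at h
  exact h

private lemma combine {V : Type*} [AddCommGroup V] [Module K V] {ι : Type*}
    {W : Submodule K V} (pred : ι → Prop) [DecidablePred pred] (v : ι → V)
    (hmem : ∀ j, pred j → v j ∈ W)
    (h1 : LinearIndependent K (fun j : {j // pred j} => (⟨v j, hmem j j.2⟩ : W)))
    (h2 : LinearIndependent K (fun j : {j // ¬ pred j} => W.mkQ (v j))) :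
    LinearIndependent K v := by
  rw [← linearIndependent_equiv (Equiv.sumCompl pred)]
  have h := LinearIndependent.sumElim_of_quotient h1 (fun j : {j // ¬ pred j} => v j) h2
  convert h using 1
  funext x
  cases x <;> simp
  rfl

/-- Key auxiliary induction: given pairs of vectors whose spans satisfy the Hall
condition, one can choose one vector from each pair so that the resulting family
is linearly independent. -/
private lemma aux : ∀ (n : ℕ) {V : Type*} [AddCommGroup V] [Module K V]
    [FiniteDimensional K V] {ι : Type*} [Fintype ι] [DecidableEq ι],
    Fintype.card ι = n → ∀ (p p' : ι → V),
    (∀ I : Finset ι, I.card ≤ finrank K ↥(I.sup fun i => Submodule.span K {p i, p' i})) →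
    ∃ σ : ι → Bool, LinearIndependent K fun i => if σ i then p i else p' i := by
  intro n
  induction n using Nat.strong_induction_on with
  | _ n ih =>
  intro V _ _ _ ι _ _ hcard p p' hall
  classical
  set Q : ι → Submodule K V := fun i => Submodule.span K {p i, p' i} with hQ
  rcases Nat.eq_zero_or_pos n with hn0 | hn1
  · -- empty index type
    subst hn0
    have : IsEmpty ι := Fintype.card_eq_zero_iff.mp hcard
    exact ⟨fun _ => true, linearIndependent_empty_type⟩
  by_cases htight : ∃ I : Finset ι, I.Nonempty ∧ I ≠ Finset.univ ∧
      finrank K ↥(I.sup Q) ≤ I.card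
  · -- tight set case: split into W = sup of tight set and the quotient
    obtain ⟨I, hIne, hIuniv, hIle⟩ := htight
    set W : Submodule K V := I.sup Q with hW
    have hQleW : ∀ j : ι, j ∈ I → Q j ≤ W := fun j hj => Finset.le_sup hj
    have hpW : ∀ j : ι, j ∈ I → p j ∈ W := fun j hj =>
      hQleW j hj (Submodule.subset_span (by simp))
    have hp'W : ∀ j : ι, j ∈ I → p' j ∈ W := fun j hj =>
      hQleW j hj (Submodule.subset_span (by simp))
    -- family inside W
    set q : {j // j ∈ I} → W := fun j => ⟨p j, hpW j j.2⟩ with hq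
    set q' : {j // j ∈ I} → W := fun j => ⟨p' j, hp'W j j.2⟩ with hq'
    have hmapspan : ∀ j : {j // j ∈ I},
        (Submodule.span K {q j, q' j}).map W.subtype = Q j.1 := by
      intro j
      rw [Submodule.map_span, Set.image_pair]
      rfl
    have hallW : ∀ J : Finset {j // j ∈ I},
        J.card ≤ finrank K ↥(J.sup fun j => Submodule.span K {q j, q' j}) := by
      intro J
      set J' : Finset ι := J.map (Function.Embedding.subtype _) with hJ'
      have hcardJ : J'.card = J.card := Finset.card_map _
      have hsup : J'.sup Q = (J.sup fun j => Submodule.span K {q j, q' j}).map W.subtype := by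
        rw [mapSup, hJ', Finset.sup_map]
        refine Finset.sup_congr rfl fun j _ => ?_
        exact (hmapspan j).symm
      have := hall J'
      rw [hsup, hcardJ] at this
      rwa [(Submodule.equivMapOfInjective W.subtype W.injective_subtype
        (J.sup fun j => Submodule.span K {q j, q' j})).finrank_eq]
    have hcardI : Fintype.card {j // j ∈ I} = I.card := Fintype.card_coe I
    have hIcard_lt : I.card < n := by
      rw [← hcard]
      exact Finset.card_lt_card (Finset.ssubset_univ_iff.mpr hIuniv)
    obtain ⟨σ₁, hσ₁⟩ := ih I.card hIcard_lt hcardI q q' hallW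
    -- family in the quotient V ⧸ W
    set pq : {j // ¬ j ∈ I} → V ⧸ W := fun j => W.mkQ (p j) with hpq
    set pq' : {j // ¬ j ∈ I} → V ⧸ W := fun j => W.mkQ (p' j) with hpq'
    have hqspan : ∀ j : {j // ¬ j ∈ I},
        Submodule.span K {pq j, pq' j} = (Q j.1).map W.mkQ := by
      intro j
      rw [hQ, Submodule.map_span, Set.image_pair]
    have hfinW : finrank K W = I.card :=
      le_antisymm hIle (by simpa using hall I)
    have hallQ : ∀ J : Finset {j // ¬ j ∈ I},
        J.card ≤ finrank K ↥(J.sup fun j => Submodule.span K {pq j, pq' j}) := by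
      intro J
      set J' : Finset ι := J.map (Function.Embedding.subtype _) with hJ'
      have hcardJ : J'.card = J.card := Finset.card_map _
      have hdisj : Disjoint J' I := by
        rw [Finset.disjoint_left]
        rintro a ha haI
        rw [hJ', Finset.mem_map] at ha
        obtain ⟨b, _, rfl⟩ := ha
        exact b.2 haI
      have hsupQ : (J.sup fun j => Submodule.span K {pq j, pq' j}) =
          (J'.sup Q).map W.mkQ := by
        rw [mapSup, hJ', Finset.sup_map]
        exact Finset.sup_congr rfl fun j _ => hqspan j
      set X : Submodule K V := J'.sup Q with hX
      have hXW : X ⊔ W = (J' ∪ I).sup Q := by rw [Finset.sup_union]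
      have hcardJI : (J' ∪ I).card = J.card + I.card := by
        rw [Finset.card_union_of_disjoint hdisj, hcardJ]
      have h1 : J.card + I.card ≤ finrank K ↥(X ⊔ W) := by
        rw [hXW, ← hcardJI]; exact hall _
      -- compare map of X with map of X ⊔ W
      have hmapeq : X.map W.mkQ = (X ⊔ W).map W.mkQ := by
        rw [Submodule.map_sup]
        have hbot : W.map W.mkQ = ⊥ :=
          eq_bot_iff.mpr (Submodule.map_le_iff_le_comap.mpr
            (by rw [Submodule.comap_bot, Submodule.ker_mkQ]))
        rw [hbot, sup_bot_eq]
      have hrank := frkAdd W (X ⊔ W)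
      have hinf : (X ⊔ W) ⊓ W = W := inf_eq_right.mpr le_sup_right
      rw [hinf, hfinW, ← hmapeq] at hrank
      rw [hsupQ]
      omega
    have hcardC : Fintype.card {j // ¬ j ∈ I} = n - I.card := by
      rw [Fintype.card_subtype_compl, hcard, Fintype.card_coe]
    have hlt : n - I.card < n := by
      have : 1 ≤ I.card := hIne.card_pos
      omega
    obtain ⟨σ₂, hσ₂⟩ := ih (n - I.card) hlt hcardC pq pq' hallQ
    -- combine
    set v : ι → V := fun i => if (if h : i ∈ I then σ₁ ⟨i, h⟩ else σ₂ ⟨i, h⟩) then p i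
      else p' i with hv
    have hvI : ∀ (j : ι) (hj : j ∈ I), v j = if σ₁ ⟨j, hj⟩ then p j else p' j := by
      intro j hj
      rw [hv]; dsimp only; rw [dif_pos hj]
    have hvC : ∀ (j : ι) (hj : ¬ j ∈ I), v j = if σ₂ ⟨j, hj⟩ then p j else p' j := by
      intro j hj
      rw [hv]; dsimp only; rw [dif_neg hj]
    have hvmem : ∀ j, j ∈ I → v j ∈ W := by
      intro j hj
      rw [hvI j hj]
      by_cases h : σ₁ ⟨j, hj⟩ <;> simp only [h, if_true, if_false]
      · exact hpW j hj
      · exact hp'W j hj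
    refine ⟨fun j => if h : j ∈ I then σ₁ ⟨j, h⟩ else σ₂ ⟨j, h⟩, ?_⟩
    refine combine (fun j => j ∈ I) v hvmem ?_ ?_
    · convert hσ₁ using 1
      funext j
      apply Subtype.ext
      show v j.1 = ((if σ₁ j then q j else q' j : W) : V)
      rw [hvI j.1 j.2, apply_ite (Subtype.val : W → V)]
      rfl
    · convert hσ₂ using 1
      funext j
      show W.mkQ (v j.1) = if σ₂ j then pq j else pq' j
      rw [hvC j.1 j.2, apply_ite W.mkQ]
      rfl
  · -- no tight set: quotient out a single vector
    push_neg at htight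
    have hne : Nonempty ι := Fintype.card_pos_iff.mp (hcard ▸ hn1)
    obtain ⟨i₀⟩ := hne
    -- choose a nonzero vector among p i₀, p' i₀
    have hQi₀ : 1 ≤ finrank K ↥(Q i₀) := by
      have := hall {i₀}
      simpa using this
    have hvne : ∃ b₀ : Bool, (if b₀ then p i₀ else p' i₀) ≠ 0 := by
      by_contra h
      push_neg at h
      have h1 : p i₀ = 0 := by simpa using h true
      have h2 : p' i₀ = 0 := by simpa using h false
      have : Q i₀ = ⊥ := by
        rw [hQ]; dsimp only; rw [h1, h2]; simp
      rw [this] at hQi₀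
      simp at hQi₀
    obtain ⟨b₀, hb₀⟩ := hvne
    set v₀ : V := if b₀ then p i₀ else p' i₀ with hv₀
    set W : Submodule K V := Submodule.span K {v₀} with hW
    have hfinW : finrank K W = 1 := finrank_span_singleton hb₀
    -- quotient family
    set pq : {j // ¬ j = i₀} → V ⧸ W := fun j => W.mkQ (p j) with hpq
    set pq' : {j // ¬ j = i₀} → V ⧸ W := fun j => W.mkQ (p' j) with hpq'
    have hqspan : ∀ j : {j // ¬ j = i₀},
        Submodule.span K {pq j, pq' j} = (Q j.1).map W.mkQ := by
      intro j
      rw [hQ, Submodule.map_span, Set.image_pair]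
    have hallQ : ∀ J : Finset {j // ¬ j = i₀},
        J.card ≤ finrank K ↥(J.sup fun j => Submodule.span K {pq j, pq' j}) := by
      intro J
      rcases J.eq_empty_or_nonempty with rfl | hJne
      · simp
      set J' : Finset ι := J.map (Function.Embedding.subtype _) with hJ'
      have hcardJ : J'.card = J.card := Finset.card_map _
      have hJ'ne : J'.Nonempty := hJne.map
      have hJ'univ : J' ≠ Finset.univ := by
        intro h
        have : i₀ ∈ J' := h ▸ Finset.mem_univ i₀
        rw [hJ', Finset.mem_map] at this
        obtain ⟨b, _, hb⟩ := this
        exact b.2 hb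
      have hstrict : J'.card < finrank K ↥(J'.sup Q) := htight J' hJ'ne hJ'univ
      have hsupQ : (J.sup fun j => Submodule.span K {pq j, pq' j}) =
          (J'.sup Q).map W.mkQ := by
        rw [mapSup, hJ', Finset.sup_map]
        exact Finset.sup_congr rfl fun j _ => hqspan j
      have hrank := frkAdd W (J'.sup Q)
      have hle : finrank K ↥(J'.sup Q ⊓ W) ≤ 1 := by
        rw [← hfinW]
        exact Submodule.finrank_mono inf_le_right
      rw [hsupQ]
      omega
    have hcardC : Fintype.card {j // ¬ j = i₀} = n - 1 := by
      rw [Fintype.card_subtype_compl, hcard, Fintype.card_subtype_eq]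
    have hlt : n - 1 < n := by omega
    obtain ⟨σ₂, hσ₂⟩ := ih (n - 1) hlt hcardC pq pq' hallQ
    refine ⟨fun j => if h : j = i₀ then b₀ else σ₂ ⟨j, h⟩, ?_⟩
    set v : ι → V := fun i => if (if h : i = i₀ then b₀ else σ₂ ⟨i, h⟩) then p i
      else p' i with hv
    have hvI : v i₀ = v₀ := by
      rw [hv, hv₀]; dsimp only; rw [dif_pos rfl]
    have hvC : ∀ (j : ι) (hj : ¬ j = i₀), v j = if σ₂ ⟨j, hj⟩ then p j else p' j := by
      intro j hj
      rw [hv]; dsimp only; rw [dif_neg hj]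
    have hvmem : ∀ j, j = i₀ → v j ∈ W := by
      rintro j rfl
      rw [hvI]
      exact Submodule.mem_span_singleton_self v₀
    refine combine (fun j => j = i₀) v hvmem ?_ ?_
    · haveI : Unique {j // j = i₀} := ⟨⟨⟨i₀, rfl⟩⟩, fun j => Subtype.ext j.2⟩
      refine linearIndependent_unique_iff.mpr ?_
      intro h
      apply hb₀
      rw [← hvI]
      have h' : v ↑(default : {j // j = i₀}) = 0 := congrArg Subtype.val h
      have hd : ((default : {j // j = i₀}) : ι) = i₀ := (default : {j // j = i₀}).2
      rw [← hd]
      exact h'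
    · convert hσ₂ using 1
      funext j
      show W.mkQ (v j.1) = if σ₂ j then pq j else pq' j
      rw [hvC j.1 j.2, apply_ite W.mkQ]
      rfl

end Aux

/-- Hall-condition (contrapositive) form of Theorem A.1: if the nonzero
subspaces `P i` (each of dimension at most 2) satisfy the Hall condition, then
from any pair of spanning vectors of each `P i` one can choose a transversal
family which is a basis of `V`. -/
theorem stmt3 {K V : Type*} [Field K] [AddCommGroup V] [Module K V]
    [FiniteDimensional K V]
    (r : ℕ) (hr : 1 ≤ r) (hdim : Module.finrank K V = r)
    (P : Fin r → Submodule K V)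
    (hne : ∀ i, P i ≠ ⊥)
    (hd2 : ∀ i, Module.finrank K (P i) ≤ 2)
    (hall : ∀ I : Finset (Fin r), I.Nonempty →
      I.card ≤ Module.finrank K (↥(⨆ i ∈ I, P i)))
    (p p' : Fin r → V)
    (hgen : ∀ i, Submodule.span K {p i, p' i} = P i) :
    ∃ σ : Fin r → Bool,
      LinearIndependent K (fun i : Fin r => if σ i then p i else p' i) ∧
      Submodule.span K (Set.range fun i : Fin r => if σ i then p i else p' i) = ⊤ := by
  have hall' : ∀ I : Finset (Fin r),
      I.card ≤ finrank K ↥(I.sup fun i => Submodule.span K {p i, p' i}) := by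
    intro I
    rcases I.eq_empty_or_nonempty with rfl | hIne
    · simp
    have h := hall I hIne
    have : (I.sup fun i => Submodule.span K {p i, p' i}) = ⨆ i ∈ I, P i := by
      rw [Finset.sup_eq_iSup]
      exact iSup_congr fun i => iSup_congr fun _ => hgen i
    rw [this]
    exact h
  obtain ⟨σ, hσ⟩ := aux r (Fintype.card_fin r) p p' hall'
  have hnonempty : Nonempty (Fin r) := ⟨⟨0, hr⟩⟩
  refine ⟨σ, hσ, hσ.span_eq_top_of_card_eq_finrank ?_⟩
  rw [Fintype.card_fin, hdim]
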